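/- Let G be a finite group and let P(G) = {g ∈ G : the order of g is 1 or a prime}. If the prime-coprime graph Θ(G) is a split graph, then the independence number of Θ(G) equals 1 when G = P(G), and equals |G| − |P(G)| when G ≠ P(G). -/

import Mathlib

/-- The prime-coprime graph: distinct vertices `g, h` are adjacent iff
`gcd (orderOf g) (orderOf h)` is `1` or a prime. -/
def primeCoprimeGraph (G : Type*) [Monoid G] : SimpleGraph G where
  Adj g h := g ≠ h ∧
    (Nat.gcd (orderOf g) (orderOf h) = 1 ∨ (Nat.gcd (orderOf g) (orderOf h)).Prime)
  symm := by
    constructor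
    rintro g h ⟨hne, hd⟩
    exact ⟨hne.symm, by rwa [Nat.gcd_comm]⟩
  loopless := by constructor; rintro g ⟨hne, -⟩; exact hne rfl

/-- A set of vertices is independent if no two of its elements are adjacent. -/
def IsIndepSet {V : Type*} (Γ : SimpleGraph V) (s : Set V) : Prop :=
  s.Pairwise fun a b => ¬ Γ.Adj a b

open scoped Classical in
/-- The independence number of a graph on a finite vertex set. -/
noncomputable def indepNum {V : Type*} [Fintype V] (Γ : SimpleGraph V) : ℕ :=
  Finset.univ.sup fun s : Finset V => if IsIndepSet Γ (s : Set V) then s.card else 0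

/-- A graph is split if its vertex set can be partitioned into two disjoint nonempty
subsets, one a clique and the other an independent set. -/
def IsSplit {V : Type*} (Γ : SimpleGraph V) : Prop :=
  ∃ K I : Set V, K.Nonempty ∧ I.Nonempty ∧ Disjoint K I ∧ K ∪ I = Set.univ ∧
    Γ.IsClique K ∧ IsIndepSet Γ I

/-- Elements of prime (or trivial) order are universal vertices. -/
lemma adj_of_mem_P {G : Type*} [Group G] {x y : G}
    (hx : orderOf x = 1 ∨ (orderOf x).Prime) (hne : x ≠ y) :
    (primeCoprimeGraph G).Adj x y := by
  refine ⟨hne, ?_⟩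
  rcases hx with h1 | hp
  · left; rw [h1, Nat.gcd_one_left]
  · rcases (Nat.Prime.eq_one_or_self_of_dvd hp _ (Nat.gcd_dvd_left (orderOf x) (orderOf y)))
      with h | h
    · exact Or.inl h
    · exact Or.inr (by rw [h]; exact hp)

lemma ne_inv_of_comp {G : Type*} [Group G] {g : G}
    (hg : ¬(orderOf g = 1 ∨ (orderOf g).Prime)) : g ≠ g⁻¹ := by
  intro hEq
  have h2 : g ^ 2 = 1 := by
    rw [pow_two]
    nth_rewrite 2 [hEq]
    exact mul_inv_cancel g
  have hd : orderOf g ∣ 2 := orderOf_dvd_of_pow_eq_one h2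
  rcases Nat.Prime.eq_one_or_self_of_dvd Nat.prime_two _ hd with h | h
  · exact hg (Or.inl h)
  · exact hg (Or.inr (by rw [h]; exact Nat.prime_two))

lemma not_adj_inv {G : Type*} [Group G] {g : G}
    (hg : ¬(orderOf g = 1 ∨ (orderOf g).Prime)) :
    ¬ (primeCoprimeGraph G).Adj g g⁻¹ := by
  rintro ⟨-, hd⟩
  rw [orderOf_inv, Nat.gcd_self] at hd
  exact hg hd

/-- Under the split hypothesis, distinct composite-order elements are nonadjacent. -/
lemma comp_not_adj {G : Type*} [Group G] (h : IsSplit (primeCoprimeGraph G))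
    {g h' : G} (hg : ¬(orderOf g = 1 ∨ (orderOf g).Prime))
    (hh : ¬(orderOf h' = 1 ∨ (orderOf h').Prime)) (hne : g ≠ h') :
    ¬ (primeCoprimeGraph G).Adj g h' := by
  rintro ⟨-, hd⟩
  obtain ⟨K, I, -, -, -, hcover, hK, hI⟩ := h
  -- one of g, g⁻¹ lies in I
  have key : ∀ x : G, ¬(orderOf x = 1 ∨ (orderOf x).Prime) →
      ∃ a, a ∈ I ∧ orderOf a = orderOf x := by
    intro x hx
    have hxmem : x ∈ K ∪ I := hcover ▸ Set.mem_univ x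
    have hxinv : x⁻¹ ∈ K ∪ I := hcover ▸ Set.mem_univ x⁻¹
    rcases hxmem with hxK | hxI
    · rcases hxinv with hxiK | hxiI
      · exact absurd (hK hxK hxiK (ne_inv_of_comp hx)) (not_adj_inv hx)
      · exact ⟨x⁻¹, hxiI, orderOf_inv x⟩
    · exact ⟨x, hxI, rfl⟩
  obtain ⟨a, haI, hao⟩ := key g hg
  obtain ⟨b, hbI, hbo⟩ := key h' hh
  have hab : a ≠ b := by
    intro hEq
    rw [← hao, hEq, hbo, Nat.gcd_self] at hd
    exact hh hd
  exact hI haI hbI hab ⟨hab, by rwa [hao, hbo]⟩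

theorem indepNum_of_split (G : Type*) [Group G] [Fintype G]
    (h : IsSplit (primeCoprimeGraph G)) :
    ((∀ g : G, orderOf g = 1 ∨ (orderOf g).Prime) →
      indepNum (primeCoprimeGraph G) = 1) ∧
    (¬(∀ g : G, orderOf g = 1 ∨ (orderOf g).Prime) →
      indepNum (primeCoprimeGraph G) =
        Fintype.card G - Nat.card {g : G // orderOf g = 1 ∨ (orderOf g).Prime}) := by
  classical
  constructor
  · -- every element has prime or trivial order: the graph is complete
    intro hall
    apply le_antisymm
    · apply Finset.sup_le
      intro s _
      split_ifs with hs
      · refine Finset.card_le_one.2 fun a ha b hb => ?_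
        by_contra hne
        exact hs (Finset.mem_coe.2 ha) (Finset.mem_coe.2 hb) hne (adj_of_mem_P (hall a) hne)
      · exact Nat.zero_le 1
    · have := Finset.le_sup (f := fun s : Finset G =>
        if IsIndepSet (primeCoprimeGraph G) (s : Set G) then s.card else 0)
        (Finset.mem_univ ({1} : Finset G))
      have h1 : IsIndepSet (primeCoprimeGraph G) (({1} : Finset G) : Set G) := by
        rw [Finset.coe_singleton]
        exact Set.pairwise_singleton _ _
      rw [if_pos h1, Finset.card_singleton] at this
      exact this
  · intro hnall
    obtain ⟨g₀, hg₀⟩ := not_forall.1 hnall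
    set P : G → Prop := fun g => orderOf g = 1 ∨ (orderOf g).Prime with hP
    set C : Finset G := Finset.univ.filter (fun g => ¬ P g) with hC
    have hg₀C : g₀ ∈ C := Finset.mem_filter.2 ⟨Finset.mem_univ _, hg₀⟩
    have hmain : indepNum (primeCoprimeGraph G) = C.card := by
      apply le_antisymm
      · apply Finset.sup_le
        intro s _
        split_ifs with hs
        · by_cases hsub : s ⊆ C
          · exact Finset.card_le_card hsub
          · obtain ⟨x, hxs, hxC⟩ := Finset.not_subset.1 hsub
            have hxP : P x := by
              by_contra hxP
              exact hxC (Finset.mem_filter.2 ⟨Finset.mem_univ _, hxP⟩)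
            have : s ⊆ {x} := by
              intro y hy
              rw [Finset.mem_singleton]
              by_contra hne
              exact hs (Finset.mem_coe.2 hxs) (Finset.mem_coe.2 hy) (Ne.symm hne)
                (adj_of_mem_P hxP (Ne.symm hne))
            calc s.card ≤ ({x} : Finset G).card := Finset.card_le_card this
              _ = 1 := Finset.card_singleton x
              _ ≤ C.card := Finset.card_pos.2 ⟨g₀, hg₀C⟩
        · exact Nat.zero_le _
      · have := Finset.le_sup (f := fun s : Finset G =>
          if IsIndepSet (primeCoprimeGraph G) (s : Set G) then s.card else 0)
          (Finset.mem_univ C)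
        have hCind : IsIndepSet (primeCoprimeGraph G) (C : Set G) := by
          intro a ha b hb hne
          have haC := Finset.mem_filter.1 (Finset.mem_coe.1 ha)
          have hbC := Finset.mem_filter.1 (Finset.mem_coe.1 hb)
          exact comp_not_adj h haC.2 hbC.2 hne
        rwa [if_pos hCind] at this
    rw [hmain]
    have hcard : Nat.card {g : G // P g} = (Finset.univ.filter P).card := by
      rw [Nat.card_eq_fintype_card, Fintype.card_subtype]
    have hsum := Finset.card_filter_add_card_filter_not
      (s := (Finset.univ : Finset G)) (p := P)
    rw [Finset.card_univ] at hsum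
    rw [hcard, hC]
    omega
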